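/- If X is a locally ccc Hausdorff space, then |X| ≤ (wL(X)·πχ(X))^(ψ_c(X)·t(X)). -/

import Mathlib

open Cardinal Set

universe u

section Defs
variable (X : Type u) [TopologicalSpace X]

/-- An open cover of the whole space. -/
def IsOpenCover (𝒰 : Set (Set X)) : Prop := (∀ U ∈ 𝒰, IsOpen U) ∧ ⋃₀ 𝒰 = Set.univ

/-- The cellularity: supremum of cardinalities of pairwise disjoint families of nonempty
open sets, plus `ℵ₀`. -/
noncomputable def cellularity : Cardinal.{u} :=
  max ℵ₀ (⨆ 𝒰 : {𝒰 : Set (Set X) // (∀ U ∈ 𝒰, IsOpen U ∧ U.Nonempty) ∧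
    𝒰.PairwiseDisjoint id}, #𝒰.1)

/-- The weak Lindelöf degree. -/
noncomputable def wLdeg : Cardinal.{u} :=
  sInf {κ | ℵ₀ ≤ κ ∧ ∀ 𝒰 : Set (Set X), IsOpenCover X 𝒰 →
    ∃ 𝒱 ⊆ 𝒰, #𝒱 ≤ κ ∧ Dense (⋃₀ 𝒱)}

/-- The tightness. -/
noncomputable def tightness : Cardinal.{u} :=
  sInf {κ | ℵ₀ ≤ κ ∧ ∀ (A : Set X) (x : X), x ∈ closure A →
    ∃ B ⊆ A, #B ≤ κ ∧ x ∈ closure B}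

/-- The π-character. -/
noncomputable def piCharacter : Cardinal.{u} :=
  sInf {κ | ℵ₀ ≤ κ ∧ ∀ x : X, ∃ 𝒬 : Set (Set X), #𝒬 ≤ κ ∧
    (∀ P ∈ 𝒬, IsOpen P ∧ P.Nonempty) ∧
    ∀ U : Set X, IsOpen U → x ∈ U → ∃ P ∈ 𝒬, P ⊆ U}

/-- The pseudocharacter. -/
noncomputable def pseudoChar : Cardinal.{u} :=
  sInf {κ | ℵ₀ ≤ κ ∧ ∀ x : X, ∃ 𝒱 : Set (Set X), #𝒱 ≤ κ ∧
    (∀ V ∈ 𝒱, IsOpen V ∧ x ∈ V) ∧ ⋂₀ 𝒱 = {x}}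

/-- The closed pseudocharacter. -/
noncomputable def closedPseudoChar : Cardinal.{u} :=
  sInf {κ | ℵ₀ ≤ κ ∧ ∀ x : X, ∃ 𝒱 : Set (Set X), #𝒱 ≤ κ ∧
    (∀ V ∈ 𝒱, IsOpen V ∧ x ∈ V) ∧ (⋂ V ∈ 𝒱, closure V) = {x}}

/-- The density. -/
noncomputable def densityCard : Cardinal.{u} :=
  sInf {κ | ℵ₀ ≤ κ ∧ ∃ D : Set X, #D ≤ κ ∧ Dense D}

/-- The star of a set `A` with respect to a family `𝒰`. -/
def st (A : Set X) (𝒰 : Set (Set X)) : Set X := ⋃₀ {U | U ∈ 𝒰 ∧ (A ∩ U).Nonempty}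

/-- The θ-closure of a set. -/
def thetaClosure (A : Set X) : Set X :=
  {x | ∀ U : Set X, IsOpen U → x ∈ U → (closure U ∩ A).Nonempty}

/-- The θ-density. -/
noncomputable def thetaDensityCard : Cardinal.{u} :=
  sInf {κ | ℵ₀ ≤ κ ∧ ∃ D : Set X, #D ≤ κ ∧ thetaClosure X D = Set.univ}

/-- A discrete family of sets: each point has a neighborhood meeting at most one member. -/
def IsDiscreteFamily (𝒰 : Set (Set X)) : Prop :=
  ∀ x : X, ∃ V : Set X, IsOpen V ∧ x ∈ V ∧ {U | U ∈ 𝒰 ∧ (V ∩ U).Nonempty}.Subsingleton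

/-- Countable discrete cellularity. -/
def CDC : Prop :=
  ∀ 𝒰 : Set (Set X), (∀ U ∈ 𝒰, IsOpen U ∧ U.Nonempty) → IsDiscreteFamily X 𝒰 → 𝒰.Countable

/-- Star-cdc: every open cover has a cdc subspace whose star covers the space. -/
def StarCDC : Prop :=
  ∀ 𝒰 : Set (Set X), IsOpenCover X 𝒰 → ∃ Y : Set X, CDC ↥Y ∧ st X Y 𝒰 = Set.univ

/-- H-closed space: every open cover has a finite subfamily with dense union. -/
def IsHClosedSpace : Prop :=
  ∀ 𝒰 : Set (Set X), IsOpenCover X 𝒰 → ∃ 𝒱 ⊆ 𝒰, 𝒱.Finite ∧ Dense (⋃₀ 𝒱)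

/-- Countable cellularity (ccc). -/
def CCCSpace : Prop :=
  ∀ 𝒰 : Set (Set X), (∀ U ∈ 𝒰, IsOpen U ∧ U.Nonempty) → 𝒰.PairwiseDisjoint id → 𝒰.Countable

/-- Weakly Lindelöf space. -/
def WeaklyLindelof : Prop :=
  ∀ 𝒰 : Set (Set X), IsOpenCover X 𝒰 → ∃ 𝒱 ⊆ 𝒰, 𝒱.Countable ∧ Dense (⋃₀ 𝒱)

/-- Almost Lindelöf space. -/
def AlmostLindelof : Prop :=
  ∀ 𝒰 : Set (Set X), IsOpenCover X 𝒰 → ∃ 𝒱 ⊆ 𝒰, 𝒱.Countable ∧ (⋃ V ∈ 𝒱, closure V) = Set.univ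

/-- A π-base: a family of nonempty open sets such that every nonempty open set contains one. -/
def IsPiBase (ℬ : Set (Set X)) : Prop :=
  (∀ B ∈ ℬ, IsOpen B ∧ B.Nonempty) ∧
  ∀ U : Set X, IsOpen U → U.Nonempty → ∃ B ∈ ℬ, B ⊆ U

/-- Power homogeneous: some power of `X` is homogeneous. -/
def PowerHomogeneous : Prop :=
  ∃ ι : Type u, ∀ x y : ι → X, ∃ h : (ι → X) ≃ₜ (ι → X), h x = y

/-- A strong `G_δ`-diagonal of rank 2. -/
def HasStrongRank2Diagonal : Prop :=
  ∃ 𝒰 : ℕ → Set (Set X), (∀ n, IsOpenCover X (𝒰 n)) ∧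
    ∀ x : X, (⋂ n, closure (st X (st X {x} (𝒰 n)) (𝒰 n))) = {x}

/-- A `G_δ`-diagonal of rank 2. -/
def HasRank2Diagonal : Prop :=
  ∃ 𝒰 : ℕ → Set (Set X), (∀ n, IsOpenCover X (𝒰 n)) ∧
    ∀ x : X, (⋂ n, st X (st X {x} (𝒰 n)) (𝒰 n)) = {x}

/-- A `G_δ`-diagonal of rank 3. -/
def HasRank3Diagonal : Prop :=
  ∃ 𝒰 : ℕ → Set (Set X), (∀ n, IsOpenCover X (𝒰 n)) ∧
    ∀ x : X, (⋂ n, st X (st X (st X {x} (𝒰 n)) (𝒰 n)) (𝒰 n)) = {x}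

/-- Basically disconnected: the closure of every cozero set is open. -/
def BasicallyDisconnected : Prop :=
  ∀ f : C(X, ℝ), IsOpen (closure {x | f x ≠ 0})

end Defs

section Aux

lemma aux_exists_range_eq {β I : Type u} (A : Set β) (hA : A.Nonempty)
    (h : #A ≤ #I) : ∃ e : I → β, Set.range e = A := by
  obtain ⟨f⟩ := (Cardinal.le_def _ _).1 h
  haveI : Nonempty ↥A := hA.to_subtype
  refine ⟨fun i => ↑(Function.invFun f i), ?_⟩
  apply Set.Subset.antisymm
  · rintro b ⟨i, rfl⟩; exact (Function.invFun f i).2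
  · rintro b hb
    exact ⟨f ⟨b, hb⟩, by simp [Function.leftInverse_invFun f.injective ⟨b, hb⟩]⟩

lemma aux_countable_enum {β : Type u} (T : Set (Set β)) (hT : T.Countable) :
    ∃ u : ℕ → Set β, (∀ n, u n ∈ insert ∅ T) ∧ ⋃₀ T = ⋃ n, u n := by
  rcases T.eq_empty_or_nonempty with rfl | hne
  · exact ⟨fun _ => ∅, fun n => mem_insert _ _, by simp⟩
  · obtain ⟨f, rfl⟩ := hT.exists_eq_range hne
    exact ⟨f, fun n => mem_insert_of_mem _ ⟨n, rfl⟩, by rw [Set.sUnion_range]⟩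

lemma aux_mem_closure_inter {X : Type u} [TopologicalSpace X] {x : X} {A W : Set X}
    (hW : IsOpen W) (hxW : x ∈ W) (hxA : x ∈ closure A) : x ∈ closure (A ∩ W) := by
  rw [mem_closure_iff] at hxA ⊢
  intro o ho hxo
  obtain ⟨y, hy⟩ := hxA (o ∩ W) (ho.inter hW) ⟨hxo, hxW⟩
  exact ⟨y, ⟨hy.1.1, hy.2, hy.1.2⟩⟩

lemma aux_ccc_dense {X : Type u} [TopologicalSpace X] {V : Set X}
    (hccc : ∀ 𝒰 : Set (Set X), (∀ U ∈ 𝒰, IsOpen U ∧ U.Nonempty ∧ U ⊆ V) →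
      𝒰.PairwiseDisjoint id → 𝒰.Countable)
    (𝒢 : Set (Set X)) (h𝒢 : ∀ G ∈ 𝒢, IsOpen G ∧ G ⊆ V) :
    ∃ T ⊆ 𝒢, T.Countable ∧
      ∀ N : Set X, IsOpen N → (N ∩ ⋃₀ 𝒢).Nonempty → (N ∩ ⋃₀ T).Nonempty := by
  classical
  set 𝒟 : Set (Set X) := {W | IsOpen W ∧ W.Nonempty ∧ ∃ G ∈ 𝒢, W ⊆ G} with h𝒟
  obtain ⟨𝒞, h𝒞⟩ : ∃ 𝒞, Maximal (· ∈ {𝒞 : Set (Set X) | 𝒞 ⊆ 𝒟 ∧ 𝒞.PairwiseDisjoint id}) 𝒞 := by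
    apply zorn_subset
    intro c hc hchain
    refine ⟨⋃₀ c, ⟨?_, ?_⟩, fun s hs => subset_sUnion_of_mem hs⟩
    · exact sUnion_subset fun t ht => (hc ht).1
    · intro a ha b hb hab
      obtain ⟨ta, hta, haa⟩ := ha
      obtain ⟨tb, htb, hbb⟩ := hb
      rcases hchain.total hta htb with hsub | hsub
      · exact (hc htb).2 (hsub haa) hbb hab
      · exact (hc hta).2 haa (hsub hbb) hab
  have h𝒞count : 𝒞.Countable := by
    apply hccc 𝒞 _ h𝒞.1.2
    intro U hU
    obtain ⟨hUo, hUne, G, hG, hUG⟩ := h𝒞.1.1 hU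
    exact ⟨hUo, hUne, hUG.trans (h𝒢 G hG).2⟩
  have hchoice : ∀ C ∈ 𝒞, ∃ G ∈ 𝒢, C ⊆ G := fun C hC => (h𝒞.1.1 hC).2.2
  choose gext hgext1 hgext2 using hchoice
  classical
  set g : Set X → Set X := fun C => if h : C ∈ 𝒞 then gext C h else ∅ with hg
  refine ⟨g '' 𝒞, ?_, h𝒞count.image g, ?_⟩
  · rintro _ ⟨C, hC, rfl⟩
    simpa [hg, hC] using hgext1 C hC
  · rintro N hN ⟨x, hxN, G, hG, hxG⟩
    have hNG : (N ∩ G) ∈ 𝒟 := ⟨hN.inter (h𝒢 G hG).1, ⟨x, hxN, hxG⟩, G, hG, inter_subset_right⟩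
    have hmeet : ∃ C ∈ 𝒞, ((N ∩ G) ∩ C).Nonempty := by
      by_contra hcon
      push_neg at hcon
      have hnotin : (N ∩ G) ∉ 𝒞 := by
        intro hmem
        have h0 := hcon _ hmem
        rw [inter_self] at h0
        exact hNG.2.1.ne_empty h0
      have hins : insert (N ∩ G) 𝒞 ∈ {𝒞 : Set (Set X) | 𝒞 ⊆ 𝒟 ∧ 𝒞.PairwiseDisjoint id} := by
        constructor
        · exact insert_subset hNG h𝒞.1.1
        · apply h𝒞.1.2.insert
          intro C hC _
          exact Set.disjoint_iff_inter_eq_empty.2 (hcon C hC)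
      have := h𝒞.2 hins (subset_insert _ _)
      exact hnotin (this (mem_insert _ _))
    obtain ⟨C, hC, y, hy⟩ := hmeet
    refine ⟨y, hy.1.1, g C, ⟨C, hC, rfl⟩, ?_⟩
    have : C ⊆ g C := by simpa [hg, hC] using hgext2 C hC
    exact this hy.2

lemma aux_ccc_interior {X : Type u} [TopologicalSpace X] {K : Set X} (hccc : CCCSpace ↥K) :
    ∀ 𝒰 : Set (Set X), (∀ U ∈ 𝒰, IsOpen U ∧ U.Nonempty ∧ U ⊆ interior K) →
      𝒰.PairwiseDisjoint id → 𝒰.Countable := by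
  intro 𝒰 h𝒰 hdisj
  set F : Set X → Set ↥K := fun U => Subtype.val ⁻¹' U with hF
  have hinj : Set.InjOn F 𝒰 := by
    intro U hU U' hU' hE
    have h1 : U ⊆ K := (h𝒰 U hU).2.2.trans interior_subset
    have h2 : U' ⊆ K := (h𝒰 U' hU').2.2.trans interior_subset
    have := congrArg (fun s => (Subtype.val : ↥K → X) '' s) hE
    simp only [hF, Subtype.image_preimage_coe] at this
    rwa [inter_eq_self_of_subset_right h1, inter_eq_self_of_subset_right h2] at this
  have himg : (F '' 𝒰).Countable := by
    apply hccc
    · rintro _ ⟨U, hU, rfl⟩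
      obtain ⟨hUo, ⟨x, hx⟩, hUK⟩ := h𝒰 U hU
      exact ⟨hUo.preimage continuous_subtype_val,
        ⟨⟨x, interior_subset (hUK hx)⟩, hx⟩⟩
    · rintro _ ⟨U, hU, rfl⟩ _ ⟨U', hU', rfl⟩ hne
      have : U ≠ U' := fun h => hne (by rw [h])
      exact Disjoint.preimage _ (hdisj hU hU' this)
  have : 𝒰 ≃ ↥(F '' 𝒰) := Set.BijOn.equiv F (hinj.bijOn_image)
  rw [← Set.countable_coe_iff] at himg ⊢
  exact Countable.of_equiv _ this.symm

lemma aux_wo_type (ψ : Cardinal.{u}) (hψ : ℵ₀ ≤ ψ) :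
    ∃ (J : Type u) (_ : LinearOrder J),
      Nonempty J ∧
      WellFounded ((· < ·) : J → J → Prop) ∧
      (∀ j : J, ∃ j' : J, j < j') ∧
      #J ≤ 2 ^ ψ ∧ (∀ j : J, #{i : J // i < j} ≤ ψ) ∧
      (∀ S : Set J, #S ≤ ψ → ∃ j : J, ∀ i ∈ S, i < j) := by
  refine ⟨(Order.succ ψ).ord.ToType, inferInstance, ?_, ?_, ?_, ?_, ?_, ?_⟩
  · rw [Ordinal.toType_nonempty_iff_ne_zero]
    intro h0
    have := Cardinal.card_ord (Order.succ ψ)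
    rw [h0] at this
    simp at this
    exact (isRegular_succ hψ).pos.ne this
  · exact IsWellFounded.wf
  · haveI : NoMaxOrder (Order.succ ψ).ord.ToType :=
      Cardinal.noMaxOrder (hψ.trans (Order.le_succ ψ))
    exact fun j => exists_gt j
  · rw [Cardinal.mk_toType, Cardinal.card_ord]
    exact le_trans (Order.succ_le_of_lt (cantor ψ)) le_rfl |>.trans le_rfl
  · intro j
    have h := Cardinal.mk_Iio_ord_toType j
    exact Order.lt_succ_iff.1 (lt_of_le_of_lt (le_of_eq rfl) h)
  · intro S hS
    have hbd : Bounded ((· < ·) : (Order.succ ψ).ord.ToType → _ → Prop) S := by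
      haveI : IsWellOrder (Order.succ ψ).ord.ToType (· < ·) := ⟨⟩
      by_contra hnb
      have hc : IsCofinal S := by
        by_contra hnc
        exact hnb (not_isCofinal_iff.1 hnc)
      have hcf := Order.cof_le hc
      rw [Ordinal.cof_toType, (isRegular_succ hψ).cof_eq] at hcf
      exact absurd (hcf.trans hS) (not_le.2 (Order.lt_succ ψ))
    obtain ⟨j, hj⟩ := hbd
    exact ⟨j, hj⟩

lemma aux_sun {X : Type u} [TopologicalSpace X]
    {π ψ : Cardinal.{u}} (hπ : ℵ₀ ≤ π) (hψ : ℵ₀ ≤ ψ)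
    {Q : X → Set (Set X)}
    (hQcard : ∀ x, #(Q x) ≤ π)
    (hQmem : ∀ x, ∀ P ∈ Q x, IsOpen P ∧ P.Nonempty)
    (hQbase : ∀ x, ∀ U : Set X, IsOpen U → x ∈ U → ∃ P ∈ Q x, P ⊆ U)
    {Vf : X → Set (Set X)}
    (hVcard : ∀ x, #(Vf x) ≤ ψ)
    (hVmem : ∀ x, ∀ W ∈ Vf x, IsOpen W ∧ x ∈ W)
    (hVsep : ∀ x, (⋂ W ∈ Vf x, closure W) = {x})
    {V : Set X} (hVo : IsOpen V)
    (hccc : ∀ 𝒰 : Set (Set X), (∀ U ∈ 𝒰, IsOpen U ∧ U.Nonempty ∧ U ⊆ V) →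
      𝒰.PairwiseDisjoint id → 𝒰.Countable) :
    #V ≤ π ^ ψ := by
  classical
  rcases isEmpty_or_nonempty X with hX | hX
  · haveI : IsEmpty ↥V := ⟨fun v => hX.elim v.1⟩
    rw [Cardinal.mk_eq_zero]
    exact Cardinal.zero_le _
  haveI := hX
  -- basic cardinal arithmetic
  set μ := π ^ ψ with hμdef
  have hπ0 : π ≠ 0 := (aleph0_pos.trans_le hπ).ne'
  have h2π : (2 : Cardinal) ≤ π := le_trans (by exact_mod_cast (nat_lt_aleph0 2).le) hπ
  have hπμ : π ≤ μ := by
    conv_lhs => rw [← power_one π]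
    exact power_le_power_left hπ0 ((le_of_lt one_lt_aleph0).trans hψ)
  have hμinf : ℵ₀ ≤ μ := hπ.trans hπμ
  have hψμ : ψ ≤ μ := le_trans (cantor ψ).le (power_le_power_right h2π)
  have hμμ : μ * μ = μ := mul_eq_self hμinf
  have hμψ : μ ^ ψ = μ := by rw [hμdef, ← power_mul, mul_eq_self hψ]
  have h2ψμ : (2 : Cardinal) ^ ψ ≤ μ := power_le_power_right h2π
  -- index types
  obtain ⟨I, hI⟩ : ∃ I : Type u, #I = ψ := ⟨ψ.out, mk_out ψ⟩
  have hIN : #(I × ℕ) = ψ := by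
    rw [mk_prod, Cardinal.mk_nat, lift_aleph0, Cardinal.lift_uzero, hI,
      mul_eq_max hψ le_rfl, max_eq_left hψ]
  obtain ⟨J, instJ, hJne, hwf, hJsucc, hJcard, hJidx, hJcof⟩ := aux_wo_type ψ hψ
  -- auxiliary objects
  set Cov : (I × ℕ → Set X) → Set X := fun u => ⋃ i : I, closure (⋃ n : ℕ, u (i, n))
    with hCov
  have hwitex : ∀ u : I × ℕ → Set X, ∃ w : X, ¬ V ⊆ Cov u → w ∈ V \ Cov u := by
    intro u
    by_cases hc : V ⊆ Cov u
    · exact ⟨Classical.arbitrary X, fun hc' => absurd hc hc'⟩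
    · obtain ⟨w, hw⟩ := not_subset.1 hc
      exact ⟨w, fun _ => hw⟩
  choose wit hwit using hwitex
  set P𝒫 : Set X → Set (Set X) := fun A => ⋃ a ∈ A, Q a with hP𝒫
  have h𝒫mono : ∀ {A B : Set X}, A ⊆ B → P𝒫 A ⊆ P𝒫 B := by
    intro A B hAB
    exact biUnion_subset_biUnion_left hAB
  have h𝒫card : ∀ A : Set X, #A ≤ μ → #(P𝒫 A) ≤ μ := by
    intro A hA
    simp only [hP𝒫]
    calc #(⋃ a ∈ A, Q a) ≤ #A * ⨆ a : A, #(Q a.1) := mk_biUnion_le _ _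
      _ ≤ μ * π := mul_le_mul' hA (ciSup_le' fun a => hQcard a.1)
      _ ≤ μ * μ := mul_le_mul_right hπμ μ
      _ = μ := hμμ
  have h𝒫open : ∀ A : Set X, ∀ P ∈ P𝒫 A, IsOpen P ∧ P.Nonempty := by
    intro A P hP
    simp only [hP𝒫, mem_iUnion] at hP
    obtain ⟨a, _, haP⟩ := hP
    exact hQmem a P haP
  set code : Set X → Set (I × ℕ → Set X) :=
    fun A => {u | (∀ p, u p ∈ insert ∅ (P𝒫 A)) ∧ ¬ V ⊆ Cov u} with hcode
  have hcodemono : ∀ {A B : Set X}, A ⊆ B → code A ⊆ code B := by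
    intro A B hAB u hu
    exact ⟨fun p => insert_subset_insert (h𝒫mono hAB) (hu.1 p), hu.2⟩
  have hcodecard : ∀ A : Set X, #A ≤ μ → #(code A) ≤ μ := by
    intro A hA
    have h1 : #(insert ∅ (P𝒫 A) : Set (Set X)) ≤ μ := by
      refine le_trans mk_insert_le ?_
      calc #(P𝒫 A) + 1 ≤ μ + 1 := add_le_add_left (h𝒫card A hA) 1
        _ = μ := add_one_eq hμinf
    have hinj : Function.Injective
        (fun (u : ↥(code A)) (p : I × ℕ) =>
          (⟨u.1 p, u.2.1 p⟩ : ↥(insert ∅ (P𝒫 A)))) := by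
      intro u u' huu
      apply Subtype.ext
      funext p
      exact congrArg Subtype.val (congrFun huu p)
    calc #(code A) ≤ #(I × ℕ → ↥(insert ∅ (P𝒫 A))) := mk_le_of_injective hinj
      _ = #(↥(insert ∅ (P𝒫 A))) ^ #(I × ℕ) := (power_def _ _).symm
      _ ≤ μ ^ ψ := by rw [hIN]; exact power_le_power_right h1
      _ = μ := hμψ
  set g : Set X → Set X := fun A => A ∪ wit '' code A with hg
  have hgsub : ∀ A, A ⊆ g A := fun A => subset_union_left
  have hgV : ∀ A, A ⊆ V → g A ⊆ V := by
    rintro A hA x (hx | ⟨u, hu, rfl⟩)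
    · exact hA hx
    · exact (hwit u hu.2).1
  have hgcard : ∀ A : Set X, #A ≤ μ → #(g A) ≤ μ := by
    intro A hA
    calc #(g A) ≤ #A + #(wit '' code A) := mk_union_le _ _
      _ ≤ μ + μ := add_le_add hA (le_trans mk_image_le (hcodecard A hA))
      _ = μ := add_eq_self hμinf
  -- the transfinite construction
  obtain ⟨f, hfeq⟩ : ∃ f : J → Set X, ∀ j, f j = g (⋃ i : {i : J // i < j}, f i.1) :=
    ⟨hwf.fix (fun j ih => g (⋃ i : {i : J // i < j}, ih i.1 i.2)),
      fun j => hwf.fix_eq _ j⟩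
  have hmono : ∀ {i j : J}, i < j → f i ⊆ f j := by
    intro i j hij
    rw [hfeq j]
    exact le_trans (Set.subset_iUnion (fun i' : {i' : J // i' < j} => f i'.1) ⟨i, hij⟩)
      (hgsub _)
  have hfV : ∀ j, f j ⊆ V := fun j => by
    induction j using WellFounded.induction hwf with
    | _ j ih =>
      rw [hfeq j]
      exact hgV _ (iUnion_subset fun i => ih i.1 i.2)
  have hstage : ∀ j : J, #(f j) ≤ μ := fun j => by
    induction j using WellFounded.induction hwf with
    | _ j ih =>
      rw [hfeq j]
      apply hgcard
      calc #(⋃ i : {i : J // i < j}, f i.1)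
          ≤ #{i : J // i < j} * ⨆ i : {i : J // i < j}, #(f i.1) := mk_iUnion_le _
        _ ≤ ψ * μ := mul_le_mul' (hJidx j) (ciSup_le' fun i => ih i.1 i.2)
        _ ≤ μ * μ := mul_le_mul' hψμ le_rfl
        _ = μ := hμμ
  set H : Set X := ⋃ j : J, f j with hH
  have hHV : H ⊆ V := iUnion_subset hfV
  have hHcard : #H ≤ μ := by
    calc #H ≤ #J * ⨆ j : J, #(f j) := mk_iUnion_le _
      _ ≤ ((2:Cardinal) ^ ψ) * μ := mul_le_mul' hJcard (ciSup_le' hstage)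
      _ ≤ μ * μ := mul_le_mul' h2ψμ le_rfl
      _ = μ := hμμ
  have hHcode : ∀ (j : J) (u : I × ℕ → Set X), u ∈ code (f j) → wit u ∈ H := by
    intro j u hu
    obtain ⟨j', hj'⟩ := hJsucc j
    have h1 : u ∈ code (⋃ i : {i : J // i < j'}, f i.1) :=
      hcodemono (Set.subset_iUnion (fun i : {i : J // i < j'} => f i.1) ⟨j, hj'⟩) hu
    have h2 : wit u ∈ f j' := by
      rw [hfeq j']
      exact Set.mem_union_right _ ⟨u, h1, rfl⟩
    exact mem_iUnion.2 ⟨j', h2⟩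
  have hcof : ∀ E : Set (Set X), #E ≤ ψ → E ⊆ P𝒫 H → ∃ j : J, E ⊆ P𝒫 (f j) := by
    intro E hE hEsub
    have hach : ∀ P : ↥E, ∃ j : J, (P : Set X) ∈ P𝒫 (f j) := by
      rintro ⟨P, hP⟩
      have h1 := hEsub hP
      simp only [hP𝒫, mem_iUnion] at h1
      obtain ⟨a, haH, haP⟩ := h1
      obtain ⟨j, hj⟩ := mem_iUnion.1 haH
      have : P ∈ P𝒫 (f j) := by
        simp only [hP𝒫, mem_iUnion]
        exact ⟨a, hj, haP⟩
      exact ⟨j, this⟩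
    choose jf hjf using hach
    obtain ⟨j, hj⟩ := hJcof (Set.range jf) (le_trans mk_range_le hE)
    refine ⟨j, fun P hP => ?_⟩
    have hlt : jf ⟨P, hP⟩ < j := hj _ (mem_range_self _)
    exact h𝒫mono (hmono hlt) (hjf ⟨P, hP⟩)
  -- main claim
  have hVH : V ⊆ H := by
    intro z hzV
    by_contra hzH
    have hTsel : ∀ W : Set X, ∃ T ⊆ {P | P ∈ P𝒫 H ∧ P ⊆ V \ closure W}, T.Countable ∧
        ∀ N : Set X, IsOpen N →
          (N ∩ ⋃₀ {P | P ∈ P𝒫 H ∧ P ⊆ V \ closure W}).Nonempty →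
          (N ∩ ⋃₀ T).Nonempty := by
      intro W
      apply aux_ccc_dense hccc
      rintro G ⟨hG𝒫, hGO⟩
      exact ⟨(h𝒫open H G hG𝒫).1, hGO.trans diff_subset⟩
    choose T hT1 hT2 hT3 using hTsel
    have hclaim1 : ∀ h ∈ H, ∃ W ∈ insert Set.univ (Vf z), h ∈ closure (⋃₀ T W) := by
      intro h hh
      have hhV : h ∈ V := hHV hh
      have hhz : h ∉ ({z} : Set X) := by
        simp only [mem_singleton_iff]
        exact fun e => hzH (e ▸ hh)
      rw [← hVsep z] at hhz
      simp only [mem_iInter, not_forall] at hhz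
      obtain ⟨W, hWVf, hWcl⟩ := hhz
      refine ⟨W, mem_insert_of_mem _ hWVf, ?_⟩
      rw [mem_closure_iff]
      intro N hN hhN
      have hNopen : IsOpen (N ∩ (V \ closure W)) :=
        hN.inter (hVo.sdiff isClosed_closure)
      obtain ⟨P, hPQ, hPsub⟩ := hQbase h (N ∩ (V \ closure W)) hNopen ⟨hhN, hhV, hWcl⟩
      have hP𝒫 : P ∈ P𝒫 H := by
        simp only [hP𝒫, mem_iUnion]
        exact ⟨h, hh, hPQ⟩
      have hP𝒢 : P ∈ {P | P ∈ P𝒫 H ∧ P ⊆ V \ closure W} :=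
        ⟨hP𝒫, hPsub.trans inter_subset_right⟩
      obtain ⟨x0, hx0⟩ := (hQmem h P hPQ).2
      have hne : ((N ∩ (V \ closure W)) ∩
          ⋃₀ {P | P ∈ P𝒫 H ∧ P ⊆ V \ closure W}).Nonempty :=
        ⟨x0, hPsub hx0, ⟨P, hP𝒢, hx0⟩⟩
      obtain ⟨y, hy⟩ := hT3 W (N ∩ (V \ closure W)) hNopen hne
      exact ⟨y, hy.1.1, hy.2⟩
    have h𝒲card : #(insert Set.univ (Vf z) : Set (Set X)) ≤ ψ := by
      refine le_trans mk_insert_le ?_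
      calc #(Vf z) + 1 ≤ ψ + 1 := add_le_add_left (hVcard z) 1
        _ = ψ := add_one_eq hψ
    obtain ⟨e, he⟩ := aux_exists_range_eq (insert Set.univ (Vf z))
      ⟨Set.univ, mem_insert _ _⟩ (by rw [hI]; exact h𝒲card)
    have hvex : ∀ W : Set X, ∃ v : ℕ → Set X,
        (∀ n, v n ∈ insert ∅ (T W)) ∧ ⋃₀ T W = ⋃ n, v n :=
      fun W => aux_countable_enum _ (hT2 W)
    choose ven hven1 hven2 using hvex
    set u : I × ℕ → Set X := fun p => ven (e p.1) p.2 with hu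
    have hCovTW : ∀ i : I, (⋃ n, u (i, n)) = ⋃₀ T (e i) := fun i => (hven2 (e i)).symm
    have humem : ∀ p, u p ∈ insert ∅ (P𝒫 H) := by
      intro p
      rcases mem_insert_iff.1 (hven1 (e p.1) p.2) with h0 | hTm
      · exact mem_insert_iff.2 (Or.inl h0)
      · exact mem_insert_of_mem _ (hT1 (e p.1) hTm).1
    have hEcard : #((Set.range u) \ {∅} : Set (Set X)) ≤ ψ := by
      calc #((Set.range u) \ {∅} : Set (Set X)) ≤ #(Set.range u) :=
            mk_le_mk_of_subset diff_subset
        _ ≤ #(I × ℕ) := mk_range_le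
        _ = ψ := hIN
    have hEsub : (Set.range u) \ {∅} ⊆ P𝒫 H := by
      rintro P ⟨⟨p, rfl⟩, hPne⟩
      rcases mem_insert_iff.1 (humem p) with h0 | hm
      · exact absurd h0 (by simpa using hPne)
      · exact hm
    obtain ⟨j, hj⟩ := hcof _ hEcard hEsub
    have hucode : ∀ p, u p ∈ insert ∅ (P𝒫 (f j)) := by
      intro p
      rcases eq_or_ne (u p) ∅ with h0 | hne
      · rw [h0]; exact mem_insert _ _
      · exact mem_insert_of_mem _ (hj ⟨mem_range_self p, by simpa using hne⟩)
    by_cases hcov : V ⊆ Cov u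
    · have hzC : z ∈ Cov u := hcov hzV
      rw [hCov] at hzC
      obtain ⟨i0, hz0⟩ := mem_iUnion.1 hzC
      have hz0' : z ∈ closure (⋃₀ T (e i0)) := by rw [← hCovTW i0]; exact hz0
      have hW0 : e i0 ∈ insert Set.univ (Vf z) := he ▸ mem_range_self i0
      rcases mem_insert_iff.1 hW0 with huniv | hVfz
      · have hTempty : T (e i0) = ∅ := by
          rw [eq_empty_iff_forall_notMem]
          intro G hG
          have hGsub := (hT1 (e i0) hG).2
          rw [huniv] at hGsub
          have hOuniv : V \ closure (Set.univ : Set X) = ∅ := by simp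
          rw [hOuniv] at hGsub
          obtain ⟨x1, hx1⟩ := (h𝒫open H G (hT1 (e i0) hG).1).2
          exact hGsub hx1
        rw [hTempty] at hz0'
        simp at hz0'
      · have hzW : z ∈ e i0 := (hVmem z _ hVfz).2
        have hWo : IsOpen (e i0) := (hVmem z _ hVfz).1
        rw [mem_closure_iff] at hz0'
        obtain ⟨y, hy1, G, hGT, hyG⟩ := hz0' (e i0) hWo hzW
        have hGsub : G ⊆ V \ closure (e i0) := (hT1 (e i0) hGT).2
        exact (hGsub hyG).2 (subset_closure hy1)
    · have hucode' : u ∈ code (f j) := ⟨hucode, hcov⟩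
      have hwH : wit u ∈ H := hHcode j u hucode'
      have hwprop := hwit u hcov
      obtain ⟨W, hW𝒲, hwcl⟩ := hclaim1 (wit u) hwH
      obtain ⟨i, rfl⟩ : ∃ i, e i = W := by rw [← he] at hW𝒲; exact hW𝒲
      apply hwprop.2
      rw [hCov]
      refine mem_iUnion.2 ⟨i, ?_⟩
      rw [hCovTW i]
      exact hwcl
  exact le_trans (mk_le_mk_of_subset hVH) hHcard

lemma aux_arith {w π ψ t : Cardinal.{u}} (hw : ℵ₀ ≤ w) (hπ : ℵ₀ ≤ π)
    (hψ : ℵ₀ ≤ ψ) (ht : ℵ₀ ≤ t) :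
    ℵ₀ ≤ (w * π) ^ (ψ * t) ∧ ((w * π) ^ (ψ * t)) ^ t ≤ (w * π) ^ (ψ * t) ∧
      ((w * π) ^ (ψ * t)) ^ ψ ≤ (w * π) ^ (ψ * t) ∧
      w * π ^ ψ ≤ (w * π) ^ (ψ * t) := by
  have h1a : (1 : Cardinal) ≤ w := le_trans (le_of_lt one_lt_aleph0) hw
  have h1π : (1 : Cardinal) ≤ π := le_trans (le_of_lt one_lt_aleph0) hπ
  have h1ψ : (1 : Cardinal) ≤ ψ := le_trans (le_of_lt one_lt_aleph0) hψ
  have h1t : (1 : Cardinal) ≤ t := le_trans (le_of_lt one_lt_aleph0) ht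
  have hbinf : ℵ₀ ≤ w * π := le_trans hw (le_mul_of_one_le_right (Cardinal.zero_le w) h1π)
  have heinf : ℵ₀ ≤ ψ * t := le_trans hψ (le_mul_of_one_le_right (Cardinal.zero_le ψ) h1t)
  have h1e : (1 : Cardinal) ≤ ψ * t := le_trans (le_of_lt one_lt_aleph0) heinf
  have hb0 : (w * π : Cardinal) ≠ 0 := (aleph0_pos.trans_le hbinf).ne'
  have hbself : w * π ≤ (w * π) ^ (ψ * t) := by
    conv_lhs => rw [← power_one (w * π)]
    exact power_le_power_left hb0 h1e
  have hμinf : ℵ₀ ≤ (w * π) ^ (ψ * t) := le_trans hbinf hbself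
  refine ⟨hμinf, ?_, ?_, ?_⟩
  · rw [← power_mul]
    apply power_le_power_left hb0
    have : ψ * t * t = ψ * t := by rw [mul_assoc, mul_eq_self ht]
    rw [this]
  · rw [← power_mul]
    apply power_le_power_left hb0
    have : ψ * t * ψ = ψ * t := by
      rw [mul_assoc, mul_comm t ψ, ← mul_assoc, mul_eq_self hψ]
    rw [this]
  · calc w * π ^ ψ ≤ ((w * π) ^ (ψ * t)) * ((w * π) ^ (ψ * t)) := by
          apply mul_le_mul'
          · exact le_trans (le_mul_of_one_le_right (Cardinal.zero_le w) h1π) hbself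
          · calc π ^ ψ ≤ (w * π) ^ ψ :=
                  power_le_power_right (le_mul_of_one_le_left (Cardinal.zero_le π) h1a)
              _ ≤ (w * π) ^ (ψ * t) := power_le_power_left hb0
                  (le_mul_of_one_le_right (Cardinal.zero_le ψ) h1t)
      _ = (w * π) ^ (ψ * t) := mul_eq_self hμinf

lemma aux_count {X : Type u} [TopologicalSpace X]
    {ψ t μ : Cardinal.{u}} (hψ : ℵ₀ ≤ ψ) (ht : ℵ₀ ≤ t) (hμ : ℵ₀ ≤ μ)
    (hμt : μ ^ t ≤ μ) (hμψ : μ ^ ψ ≤ μ)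
    {Vf : X → Set (Set X)}
    (hVcard : ∀ x, #(Vf x) ≤ ψ)
    (hVmem : ∀ x, ∀ W ∈ Vf x, IsOpen W ∧ x ∈ W)
    (hVsep : ∀ x, (⋂ W ∈ Vf x, closure W) = {x})
    {D : Set X} (hD : Dense D) (hDcard : #D ≤ μ)
    (htprop : ∀ (A : Set X), ∀ x ∈ closure A, ∃ B ⊆ A, #B ≤ t ∧ x ∈ closure B) :
    #X ≤ μ := by
  classical
  have hBex : ∀ x : X, ∃ B ⊆ D, #B ≤ t ∧ x ∈ closure B :=
    fun x => htprop D x (hD x)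
  choose B hB1 hB2 hB3 using hBex
  set c : X → Set (Set X) := fun x => (fun W => B x ∩ W) '' (Vf x) with hc
  have hxmem : ∀ x, x ∈ ⋂ S ∈ c x, closure S := by
    intro x
    simp only [hc, mem_iInter, mem_image]
    rintro S ⟨W, hW, rfl⟩
    exact aux_mem_closure_inter (hVmem x W hW).1 (hVmem x W hW).2 (hB3 x)
  have hsub : ∀ x, (⋂ S ∈ c x, closure S) ⊆ {x} := by
    intro x
    rw [← hVsep x]
    refine subset_iInter₂ fun W hW => ?_
    exact iInter₂_subset_of_subset (B x ∩ W) ⟨W, hW, rfl⟩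
      (closure_mono inter_subset_right)
  have hinj : Function.Injective c := by
    intro x y hxy
    have hy := hxmem y
    rw [← hxy] at hy
    have := hsub x hy
    simp only [mem_singleton_iff] at this
    exact this.symm
  have hSDcard : #{S : Set X // S ⊆ D ∧ #S ≤ t} ≤ μ :=
    le_trans (mk_bounded_subset_le _ t)
      (le_trans (power_le_power_right (max_le hDcard hμ)) hμt)
  have hXle : #X ≤ #{A : Set (Set X) // A ⊆ {S | S ⊆ D ∧ #S ≤ t} ∧ #A ≤ ψ} := by
    refine mk_le_of_injective (f := fun x => (⟨c x, ?_, ?_⟩ :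
      {A : Set (Set X) // A ⊆ {S | S ⊆ D ∧ #S ≤ t} ∧ #A ≤ ψ})) ?_
    · rintro S ⟨W, hW, rfl⟩
      exact ⟨inter_subset_left.trans (hB1 x), le_trans
        (mk_le_mk_of_subset inter_subset_left) (hB2 x)⟩
    · exact le_trans mk_image_le (hVcard x)
    · intro x y hxy
      exact hinj (congrArg Subtype.val hxy)
  refine le_trans hXle (le_trans (mk_bounded_subset_le _ ψ) ?_)
  refine le_trans (power_le_power_right (max_le ?_ hμ)) hμψ
  exact le_trans (mk_le_mk_of_subset (fun S hS => hS)) hSDcard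

end Aux

theorem stmt14 (X : Type u) [TopologicalSpace X] [T2Space X]
    (h : ∀ x : X, ∃ K ∈ nhds x, CCCSpace ↥K) :
    #X ≤ (wLdeg X * piCharacter X) ^ (closedPseudoChar X * tightness X) := by
  classical
  have hsep : ∀ x : X, (⋂ V ∈ {W : Set X | IsOpen W ∧ x ∈ W}, closure V) = {x} := by
    intro x
    apply Set.Subset.antisymm
    · intro y hy
      simp only [mem_iInter, mem_setOf_eq] at hy
      by_contra hyx
      simp only [mem_singleton_iff] at hyx
      obtain ⟨U, W, hU, hW, hxU, hyW, hUW⟩ := t2_separation (Ne.symm hyx)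
      have hycl : y ∈ closure U := hy U ⟨hU, hxU⟩
      rw [mem_closure_iff] at hycl
      obtain ⟨p, hp⟩ := hycl W hW hyW
      exact (Set.disjoint_iff.1 hUW.symm) ⟨hp.1, hp.2⟩
    · intro y hy
      simp only [mem_singleton_iff] at hy
      subst hy
      simp only [mem_iInter, mem_setOf_eq]
      intro W hW
      exact subset_closure hW.2
  have hwmem : ℵ₀ ≤ wLdeg X ∧ ∀ 𝒰 : Set (Set X), IsOpenCover X 𝒰 →
      ∃ 𝒱 ⊆ 𝒰, #𝒱 ≤ wLdeg X ∧ Dense (⋃₀ 𝒱) :=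
    csInf_mem (s := {κ | ℵ₀ ≤ κ ∧ ∀ 𝒰 : Set (Set X), IsOpenCover X 𝒰 →
      ∃ 𝒱 ⊆ 𝒰, #𝒱 ≤ κ ∧ Dense (⋃₀ 𝒱)}) ⟨max (#(Set X)) ℵ₀, le_max_right _ _, fun 𝒰 h𝒰 =>
      ⟨𝒰, Subset.rfl, le_trans (mk_set_le 𝒰) (le_max_left _ _), by
        rw [h𝒰.2]; exact dense_univ⟩⟩
  have hπmem : ℵ₀ ≤ piCharacter X ∧ ∀ x : X, ∃ 𝒬 : Set (Set X), #𝒬 ≤ piCharacter X ∧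
      (∀ P ∈ 𝒬, IsOpen P ∧ P.Nonempty) ∧
      ∀ U : Set X, IsOpen U → x ∈ U → ∃ P ∈ 𝒬, P ⊆ U :=
    csInf_mem (s := {κ | ℵ₀ ≤ κ ∧ ∀ x : X, ∃ 𝒬 : Set (Set X), #𝒬 ≤ κ ∧
      (∀ P ∈ 𝒬, IsOpen P ∧ P.Nonempty) ∧
      ∀ U : Set X, IsOpen U → x ∈ U → ∃ P ∈ 𝒬, P ⊆ U}) ⟨max (#(Set X)) ℵ₀, le_max_right _ _, fun x =>
      ⟨{P | IsOpen P ∧ P.Nonempty}, le_trans (mk_set_le _) (le_max_left _ _),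
       fun P hP => hP, fun U hU hxU => ⟨U, ⟨hU, ⟨x, hxU⟩⟩, Subset.rfl⟩⟩⟩
  have hψmem : ℵ₀ ≤ closedPseudoChar X ∧ ∀ x : X, ∃ 𝒱 : Set (Set X),
      #𝒱 ≤ closedPseudoChar X ∧
      (∀ V ∈ 𝒱, IsOpen V ∧ x ∈ V) ∧ (⋂ V ∈ 𝒱, closure V) = {x} :=
    csInf_mem (s := {κ | ℵ₀ ≤ κ ∧ ∀ x : X, ∃ 𝒱 : Set (Set X), #𝒱 ≤ κ ∧
      (∀ V ∈ 𝒱, IsOpen V ∧ x ∈ V) ∧ (⋂ V ∈ 𝒱, closure V) = {x}}) ⟨max (#(Set X)) ℵ₀, le_max_right _ _, fun x =>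
      ⟨{W | IsOpen W ∧ x ∈ W}, le_trans (mk_set_le _) (le_max_left _ _),
       fun W hW => hW, hsep x⟩⟩
  have htmem : ℵ₀ ≤ tightness X ∧ ∀ (A : Set X) (x : X), x ∈ closure A →
      ∃ B ⊆ A, #B ≤ tightness X ∧ x ∈ closure B :=
    csInf_mem (s := {κ | ℵ₀ ≤ κ ∧ ∀ (A : Set X) (x : X), x ∈ closure A →
      ∃ B ⊆ A, #B ≤ κ ∧ x ∈ closure B}) ⟨max (#X) ℵ₀, le_max_right _ _, fun A x hx =>
      ⟨A, Subset.rfl, le_trans (mk_set_le A) (le_max_left _ _), hx⟩⟩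
  obtain ⟨hwinf, hwprop⟩ := hwmem
  obtain ⟨hπinf, hπprop⟩ := hπmem
  obtain ⟨hψinf, hψprop⟩ := hψmem
  obtain ⟨htinf, htprop⟩ := htmem
  choose Q hQcard hQmem hQbase using hπprop
  choose Vf hVcard hVmem hVsep using hψprop
  choose K hKnhds hKccc using h
  obtain ⟨hμinf, hμt, hμψ, hμbase⟩ := aux_arith hwinf hπinf hψinf htinf
  have hcover : IsOpenCover X (Set.range fun x => interior (K x)) := by
    constructor
    · rintro U ⟨x, rfl⟩; exact isOpen_interior
    · apply Set.eq_univ_of_forall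
      intro x
      exact ⟨interior (K x), ⟨x, rfl⟩, mem_interior_iff_mem_nhds.2 (hKnhds x)⟩
  obtain ⟨𝒱, h𝒱sub, h𝒱card, h𝒱dense⟩ := hwprop _ hcover
  have hpiece : ∀ V : ↥𝒱, #(V : Set X) ≤ piCharacter X ^ closedPseudoChar X := by
    rintro ⟨V, hV⟩
    obtain ⟨x, rfl⟩ := h𝒱sub hV
    exact aux_sun hπinf hψinf hQcard hQmem hQbase hVcard hVmem hVsep
      isOpen_interior (aux_ccc_interior (hKccc x))
  have hDcard : #(⋃₀ 𝒱) ≤ (wLdeg X * piCharacter X) ^ (closedPseudoChar X * tightness X) := by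
    calc #(⋃₀ 𝒱) ≤ #𝒱 * ⨆ V : ↥𝒱, #(V : Set X) := mk_sUnion_le 𝒱
      _ ≤ wLdeg X * piCharacter X ^ closedPseudoChar X :=
          mul_le_mul' h𝒱card (ciSup_le' hpiece)
      _ ≤ _ := hμbase
  exact aux_count hψinf htinf hμinf hμt hμψ hVcard hVmem hVsep h𝒱dense hDcard htprop
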